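/- Let X be a Banach space. A nonempty weak*-closed subset K of X* is convex and weak*-compact if and only if it is co̅-compact, i.e., K = co̅(K) and every family of subsets of K of the form co̅(F) ∩ K with the finite intersection property has nonempty intersection (where subsets are taken weak*-closed convex). In particular, a co̅-closed, co̅-compact set must be norm-bounded. -/

import Mathlib

/-- The weak*-closed convex hull operator on subsets of the dual. -/
noncomputable def cobar {𝕜 X : Type*} [RCLike 𝕜] [NormedAddCommGroup X] [NormedSpace 𝕜 X]
    (S : Set (WeakDual 𝕜 X)) : Set (WeakDual 𝕜 X) :=
  closure (convexHull ℝ S)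

set_option maxHeartbeats 2000000 in
private lemma cobar_self {𝕜 X : Type*} [RCLike 𝕜] [NormedAddCommGroup X] [NormedSpace 𝕜 X]
    {s : Set (WeakDual 𝕜 X)} (hconv : Convex ℝ s) (hcl : IsClosed s) : cobar s = s := by
  rw [cobar, hconv.convexHull_eq, hcl.closure_eq]

private lemma norm_le_of_re_le {K : Type*} [RCLike K] (z : K) (b : ℝ) (hb : 0 ≤ b)
    (h1 : RCLike.re z ≤ b) (h2 : RCLike.re (-z) ≤ b)
    (h3 : RCLike.re (RCLike.I * z) ≤ b) (h4 : RCLike.re (-(RCLike.I * z)) ≤ b) :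
    ‖z‖ ≤ 2 * b := by
  have h2' : -(RCLike.re z) ≤ b := by rwa [map_neg] at h2
  have h4' : -(RCLike.re (RCLike.I * z)) ≤ b := by rwa [map_neg] at h4
  have hIz : RCLike.re (RCLike.I * z) = -(RCLike.im (RCLike.I : K) * RCLike.im z) := by
    simp [RCLike.mul_re, RCLike.I_re]
  have hkey : RCLike.im z * RCLike.re (RCLike.I * z) = -(RCLike.im z * RCLike.im z) := by
    rw [hIz]
    have : RCLike.im z * RCLike.im (RCLike.I : K) = RCLike.im z := RCLike.I_im z
    nlinarith [this]
  have hm : RCLike.im z * RCLike.im z ≤ b * b := by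
    rcases le_or_gt 0 (RCLike.im z) with h | h
    · have hmb : RCLike.im z * RCLike.im z ≤ RCLike.im z * b := by
        have := mul_le_mul_of_nonneg_left h4' h
        nlinarith [hkey, this]
      nlinarith [hmb, sq_nonneg (RCLike.im z - b)]
    · have hmb : RCLike.im z * RCLike.im z ≤ (-(RCLike.im z)) * b := by
        have := mul_le_mul_of_nonneg_left h3 (by linarith : (0:ℝ) ≤ -(RCLike.im z))
        nlinarith [hkey, this]
      nlinarith [hmb, sq_nonneg (RCLike.im z + b)]
  have hr : RCLike.re z * RCLike.re z ≤ b * b := by nlinarith [h1, h2', hb]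
  have h5 : ‖z‖ ^ 2 = RCLike.re z * RCLike.re z + RCLike.im z * RCLike.im z :=
    RCLike.norm_sq_eq_def
  nlinarith [norm_nonneg z, h5, hr, hm, hb]

/-- A nonempty weak*-closed subset `K` of the dual of a Banach space
is convex and weak*-compact if and only if it is `co̅`-compact: `K` is `co̅`-closed and
every family of `co̅`-closed subsets of `K` with the finite intersection property has
nonempty intersection.  In particular such a set must be norm-bounded. -/
theorem convex_weakStarCompact_iff_cobarCompact
    {𝕜 X : Type*} [RCLike 𝕜] [NormedAddCommGroup X] [NormedSpace 𝕜 X] [CompleteSpace X]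
    (K : Set (WeakDual 𝕜 X)) (hKne : K.Nonempty) (hKcl : IsClosed K) :
    (Convex ℝ K ∧ IsCompact K) ↔
      (cobar K = K ∧
        ∀ F : Set (Set (WeakDual 𝕜 X)),
          (∀ s ∈ F, s ⊆ K ∧ cobar s = s) →
          (∀ t : Finset (Set (WeakDual 𝕜 X)), ↑t ⊆ F → (⋂₀ (↑t : Set (Set (WeakDual 𝕜 X)))).Nonempty) →
          (⋂₀ F).Nonempty) := by
  classical
  constructor
  · rintro ⟨hconv, hcomp⟩
    refine ⟨cobar_self hconv hKcl, ?_⟩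
    intro F hF hFIP
    by_contra hem
    rw [Set.not_nonempty_iff_eq_empty] at hem
    have hFne : F.Nonempty := by
      rcases Set.eq_empty_or_nonempty F with h | h
      · exfalso
        subst h
        rw [Set.sInter_empty] at hem
        have : (Set.univ : Set (WeakDual 𝕜 X)).Nonempty := ⟨(0 : WeakDual 𝕜 X), trivial⟩
        exact absurd hem (Set.nonempty_iff_ne_empty.mp this)
      · exact h
    have hclosed : ∀ i : F, IsClosed (i : Set (WeakDual 𝕜 X)) := by
      intro i
      have := (hF i i.2).2
      rw [← this]
      exact isClosed_closure
    have hint : (K ∩ ⋂ i : F, (i : Set (WeakDual 𝕜 X))) = ∅ := by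
      have : (⋂ i : F, (i : Set (WeakDual 𝕜 X))) = ⋂₀ F := (Set.sInter_eq_iInter).symm
      rw [this, hem, Set.inter_empty]
    obtain ⟨u, hu⟩ := hcomp.elim_finite_subfamily_closed _ hclosed hint
    have hune : u.Nonempty := by
      by_contra hue
      rw [Finset.not_nonempty_iff_eq_empty] at hue
      subst hue
      simp at hu
      exact hKne.ne_empty hu
    set t : Finset (Set (WeakDual 𝕜 X)) := u.image Subtype.val with ht
    have htF : (↑t : Set (Set (WeakDual 𝕜 X))) ⊆ F := by
      intro s hs
      obtain ⟨i, _, rfl⟩ := Finset.mem_image.mp (Finset.mem_coe.mp hs)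
      exact i.2
    obtain ⟨σ, hσ⟩ := hFIP t htF
    obtain ⟨i0, hi0⟩ := hune
    have hσK : σ ∈ K := by
      have hm : (i0 : Set (WeakDual 𝕜 X)) ∈ t := Finset.mem_image_of_mem Subtype.val hi0
      exact (hF i0 i0.2).1 (hσ _ (Finset.mem_coe.mpr hm))
    have : σ ∈ K ∩ ⋂ i ∈ u, (i : Set (WeakDual 𝕜 X)) := by
      refine ⟨hσK, ?_⟩
      simp only [Set.mem_iInter]
      intro i hi
      exact hσ _ (Finset.mem_coe.mpr (Finset.mem_image_of_mem Subtype.val hi))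
    rw [hu] at this
    exact this
  · rintro ⟨hco, hFIP⟩
    have hconv : Convex ℝ K := by
      rw [← hco]
      exact (convex_convexHull ℝ K).closure
    refine ⟨hconv, ?_⟩
    -- boundedness
    have hbdd : ∀ A : X, ∃ C : ℝ, ∀ σ ∈ K, ‖σ A‖ ≤ C := by
      intro A
      by_contra hA
      push_neg at hA
      -- hA : ∀ C, ∃ σ ∈ K, C < ‖σ A‖
      have claim2 : ∃ c : 𝕜, ∀ n : ℕ, ∃ σ ∈ K, (n : ℝ) ≤ RCLike.re (c * σ A) := by
        by_contra hc
        push_neg at hc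
        obtain ⟨n1, hn1⟩ := hc 1
        obtain ⟨n2, hn2⟩ := hc (-1)
        obtain ⟨n3, hn3⟩ := hc RCLike.I
        obtain ⟨n4, hn4⟩ := hc (-RCLike.I)
        set b : ℝ := ((max (max n1 n2) (max n3 n4) : ℕ) : ℝ) with hbdef
        have hb : 0 ≤ b := Nat.cast_nonneg _
        obtain ⟨σ, hσK, hσ⟩ := hA (2 * b)
        have h1 : RCLike.re (σ A) ≤ b := by
          have := hn1 σ hσK
          simp only [one_mul] at this
          refine le_trans (le_of_lt this) ?_
          rw [hbdef]; exact_mod_cast le_max_of_le_left (le_max_left _ _)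
        have h2 : RCLike.re (-(σ A)) ≤ b := by
          have := hn2 σ hσK
          rw [neg_one_mul] at this
          refine le_trans (le_of_lt this) ?_
          rw [hbdef]; exact_mod_cast le_max_of_le_left (le_max_right _ _)
        have h3 : RCLike.re (RCLike.I * σ A) ≤ b := by
          refine le_trans (le_of_lt (hn3 σ hσK)) ?_
          rw [hbdef]; exact_mod_cast le_max_of_le_right (le_max_left _ _)
        have h4 : RCLike.re (-(RCLike.I * σ A)) ≤ b := by
          have := hn4 σ hσK
          rw [neg_mul] at this
          refine le_trans (le_of_lt this) ?_
          rw [hbdef]; exact_mod_cast le_max_of_le_right (le_max_right _ _)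
        have := norm_le_of_re_le (σ A) b hb h1 h2 h3 h4
        linarith
      obtain ⟨c, hc⟩ := claim2
      set e : X := c • A with he
      have heval : ∀ σ : WeakDual 𝕜 X, σ e = c * σ A := by
        intro σ
        rw [he, map_smul, smul_eq_mul]
      set S : ℕ → Set (WeakDual 𝕜 X) := fun n => {σ ∈ K | (n : ℝ) ≤ RCLike.re (σ e)} with hS
      have hSsub : ∀ n, S n ⊆ K := fun n σ hσ => hσ.1
      have hSconv : ∀ n, Convex ℝ (S n) := by
        intro n
        intro x hx y hy a bb ha hb hab
        refine ⟨hconv hx.1 hy.1 ha hb hab, ?_⟩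
        have happ : (a • x + bb • y) e = a • x e + bb • y e := rfl
        rw [happ, map_add, RCLike.smul_re, RCLike.smul_re]
        have := hx.2; have := hy.2
        nlinarith [hx.2, hy.2]
      have hSclosed : ∀ n, IsClosed (S n) := by
        intro n
        have : S n = K ∩ (fun σ : WeakDual 𝕜 X => RCLike.re (σ e)) ⁻¹' Set.Ici (n : ℝ) := by
          ext σ; simp [hS, Set.mem_sep_iff]
        rw [this]
        exact hKcl.inter (IsClosed.preimage
          (RCLike.continuous_re.comp (WeakDual.eval_continuous e)) isClosed_Ici)
      have hSne : ∀ n, (S n).Nonempty := by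
        intro n
        obtain ⟨σ, hσK, hσ⟩ := hc n
        exact ⟨σ, hσK, by rwa [heval]⟩
      have hSanti : ∀ {m n : ℕ}, m ≤ n → S n ⊆ S m := by
        intro m n hmn σ hσ
        exact ⟨hσ.1, le_trans (by exact_mod_cast hmn) hσ.2⟩
      have := hFIP (Set.range S)
        (by
          rintro s ⟨n, rfl⟩
          exact ⟨hSsub n, cobar_self (hSconv n) (hSclosed n)⟩)
        (by
          intro t htr
          have hch : ∀ s ∈ t, ∃ n, S n = s := fun s hs => htr hs
          choose! f hf using hch
          set N : ℕ := t.sup f with hN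
          obtain ⟨σ, hσ⟩ := hSne N
          refine ⟨σ, ?_⟩
          intro s hs
          rw [← hf s hs]
          exact hSanti (Finset.le_sup hs) hσ)
      obtain ⟨σ, hσ⟩ := this
      obtain ⟨n, hn⟩ := exists_nat_gt (RCLike.re (σ e))
      have : σ ∈ S n := hσ (S n) ⟨n, rfl⟩
      exact absurd this.2 (not_le.mpr hn)
    obtain ⟨C', hC'⟩ := banach_steinhaus (E := X) (F := 𝕜)
      (g := fun i : K => WeakDual.toStrongDual (i : WeakDual 𝕜 X))
      (fun x => by
        obtain ⟨C, hC⟩ := hbdd x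
        exact ⟨C, fun i => hC i.1 i.2⟩)
    have hb : Bornology.IsBounded (StrongDual.toWeakDual ⁻¹' K) := by
      rw [Metric.isBounded_iff_subset_closedBall 0]
      exact ⟨C', fun φ hφ => by
        simp only [Metric.mem_closedBall, dist_zero_right]
        exact hC' ⟨StrongDual.toWeakDual φ, hφ⟩⟩
    exact WeakDual.isCompact_of_bounded_of_closed hb hKcl
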